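/- Fix a set E of exceptions, and let T(X) = D(X + E) be the subdistribution-over-exceptions monad with unit η_X(x) = δ(inl x) and Kleisli extension f†(μ) = μ >>=_D f_*, where f_*(inl x) = f(x) and f_*(inr e) = δ(inr e). Then the composite map Γ_D ∘ Γ_E satisfies the Lax-Unit and Lax-Bind conditions making it a relator for the monad T: (Lax-Unit) if x R y then η_X(x) (Γ_D Γ_E R) η_Y(y); (Lax-Bind) if μ (Γ_D Γ_E R) ν and for all x, y, x R y implies f(x) (Γ_D Γ_E S) g(y), then f†(μ) (Γ_D Γ_E S) g†(ν), for all f : X → D(Z + E), g : Y → D(W + E). -/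

import Mathlib

open scoped ENNReal

/-- The mass that `μ` assigns to a subset `U`. -/
noncomputable def mass {A : Type} (μ : A → ℝ≥0∞) (U : Set A) : ℝ≥0∞ :=
  ∑' a : U, μ a

/-- The relational image `Q(U) = {b | ∃ a ∈ U, a Q b}`. -/
def relImg {A B : Type} (Q : A → B → Prop) (U : Set A) : Set B :=
  {b | ∃ a ∈ U, Q a b}

/-- The probabilistic relator `Γ_D`. -/
def GammaD {A B : Type} (Q : A → B → Prop) (μ : A → ℝ≥0∞) (ν : B → ℝ≥0∞) : Prop :=
  ∀ U : Set A, mass μ U ≤ mass ν (relImg Q U)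

/-- The exception relator `Γ_E`. -/
def GammaE (E : Type) {X Y : Type} (R : X → Y → Prop) :
    (X ⊕ E) → (Y ⊕ E) → Prop :=
  fun u v =>
    (∀ e : E, u = Sum.inr e → v = Sum.inr e) ∧
    (∀ x : X, u = Sum.inl x → ∃ y : Y, v = Sum.inl y ∧ R x y)

open Classical in
/-- The Dirac subdistribution at `a₀`. -/
noncomputable def dirac {A : Type} (a₀ : A) : A → ℝ≥0∞ :=
  fun a => if a = a₀ then 1 else 0

/-- Bind of subdistributions: `(μ >>=_D h)(b) = ∑' a, μ a * h a b`. -/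
noncomputable def bindD {A B : Type} (μ : A → ℝ≥0∞) (h : A → B → ℝ≥0∞) : B → ℝ≥0∞ :=
  fun b => ∑' a, μ a * h a b

/-- The map `f_* : X + E → D(Z + E)`. -/
noncomputable def fstar {X Z E : Type} (f : X → (Z ⊕ E) → ℝ≥0∞) :
    (X ⊕ E) → (Z ⊕ E) → ℝ≥0∞
  | Sum.inl x => f x
  | Sum.inr e => dirac (Sum.inr e)

/-- Kleisli extension for `T X = D(X + E)`: `f† (μ) = μ >>=_D f_*`. -/
noncomputable def dagger {X Z E : Type} (f : X → (Z ⊕ E) → ℝ≥0∞)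
    (μ : (X ⊕ E) → ℝ≥0∞) : (Z ⊕ E) → ℝ≥0∞ :=
  bindD μ (fstar f)

/-! ### Auxiliary lemmas -/

open MeasureTheory

lemma mass_eq_tsum_indicator {A : Type} (μ : A → ℝ≥0∞) (U : Set A) :
    mass μ U = ∑' a, U.indicator μ a := (tsum_subtype U μ).symm ▸ rfl

lemma mass_mono {A : Type} (μ : A → ℝ≥0∞) {U V : Set A} (h : U ⊆ V) :
    mass μ U ≤ mass μ V := by
  rw [mass_eq_tsum_indicator, mass_eq_tsum_indicator]
  exact Summable.tsum_le_tsum (fun a => Set.indicator_le_indicator_of_subset h (fun _ => zero_le) a)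
    ENNReal.summable ENNReal.summable

lemma mass_le_tsum {A : Type} (μ : A → ℝ≥0∞) (U : Set A) : mass μ U ≤ ∑' a, μ a := by
  rw [mass_eq_tsum_indicator]
  exact Summable.tsum_le_tsum (fun a => Set.indicator_le_self U μ a) ENNReal.summable ENNReal.summable

open Classical in
lemma mass_dirac {A : Type} (a₀ : A) (U : Set A) :
    mass (dirac a₀) U = if a₀ ∈ U then 1 else 0 := by
  by_cases h : a₀ ∈ U
  · rw [if_pos h]
    have : mass (dirac a₀) U = dirac a₀ (a₀ : A) := by
      refine tsum_eq_single (⟨a₀, h⟩ : U) ?_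
      rintro ⟨a, ha⟩ hne
      have : a ≠ a₀ := by
        intro he; apply hne; exact Subtype.ext he
      simp [dirac, this]
    rw [this]; simp [dirac]
  · rw [if_neg h]
    refine ENNReal.tsum_eq_zero.2 ?_
    rintro ⟨a, ha⟩
    have : a ≠ a₀ := fun he => h (he ▸ ha)
    simp [dirac, this]

/-- Measure associated to a weight function, on the `⊤` σ-algebra. -/
noncomputable def toMeas {A : Type} (μ : A → ℝ≥0∞) : @Measure A ⊤ :=
  @Measure.sum A A ⊤ (fun a => μ a • @Measure.dirac A ⊤ a)

lemma meas_top {A : Type} (s : Set A) : MeasurableSet[⊤] s := trivial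

lemma toMeas_apply {A : Type} (μ : A → ℝ≥0∞) (U : Set A) : toMeas μ U = mass μ U := by
  rw [toMeas, @Measure.sum_apply A A ⊤ _ U (meas_top U), mass_eq_tsum_indicator]
  congr 1
  ext a
  rw [@Measure.smul_apply, @Measure.dirac_apply' A ⊤ U a (meas_top U)]
  by_cases h : a ∈ U <;> simp [Set.indicator, h]

lemma lintegral_toMeas {A : Type} (μ : A → ℝ≥0∞) (φ : A → ℝ≥0∞) :
    ∫⁻ a, φ a ∂(toMeas μ) = ∑' a, μ a * φ a := by
  rw [toMeas, @lintegral_sum_measure]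
  congr 1
  ext a
  rw [@lintegral_smul_measure, @lintegral_dirac' A ⊤ a φ (fun _ _ => trivial)]
  rfl

/-- Key lemma: if `μ (Γ_D Q) ν` and `φ a ≤ ψ b` whenever `a Q b` (with `φ, ψ` bounded by 1),
then `∫ φ dμ ≤ ∫ ψ dν`.  Proved via the layer-cake formula. -/
lemma key_lemma {A B : Type} (Q : A → B → Prop) (μ : A → ℝ≥0∞) (ν : B → ℝ≥0∞)
    (h : GammaD Q μ ν) (φ : A → ℝ≥0∞) (ψ : B → ℝ≥0∞)
    (hφ : ∀ a, φ a ≤ 1) (hψ : ∀ b, ψ b ≤ 1)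
    (hQ : ∀ a b, Q a b → φ a ≤ ψ b) :
    ∑' a, μ a * φ a ≤ ∑' b, ν b * ψ b := by
  letI : MeasurableSpace A := ⊤
  letI : MeasurableSpace B := ⊤
  have hmφ : Measurable (fun a => (φ a).toReal) := fun _ _ => MeasurableSpace.measurableSet_top
  have hmψ : Measurable (fun b => (ψ b).toReal) := fun _ _ => MeasurableSpace.measurableSet_top
  have hφt : ∀ a, φ a ≠ ⊤ := fun a => ne_top_of_le_ne_top ENNReal.one_ne_top (hφ a)
  have hψt : ∀ b, ψ b ≠ ⊤ := fun b => ne_top_of_le_ne_top ENNReal.one_ne_top (hψ b)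
  rw [← lintegral_toMeas μ φ, ← lintegral_toMeas ν ψ]
  have eφ : ∀ a, φ a = ENNReal.ofReal ((φ a).toReal) := fun a =>
    (ENNReal.ofReal_toReal (hφt a)).symm
  have eψ : ∀ b, ψ b = ENNReal.ofReal ((ψ b).toReal) := fun b =>
    (ENNReal.ofReal_toReal (hψt b)).symm
  calc ∫⁻ a, φ a ∂(toMeas μ)
      = ∫⁻ a, ENNReal.ofReal ((φ a).toReal) ∂(toMeas μ) := by
        exact lintegral_congr fun a => eφ a
    _ = ∫⁻ t in Set.Ioi (0:ℝ), (toMeas μ) {a | t < (φ a).toReal} := by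
        exact lintegral_eq_lintegral_meas_lt (toMeas μ)
          (Filter.Eventually.of_forall fun a => ENNReal.toReal_nonneg)
          hmφ.aemeasurable
    _ ≤ ∫⁻ t in Set.Ioi (0:ℝ), (toMeas ν) {b | t < (ψ b).toReal} := by
        apply lintegral_mono_ae
        filter_upwards [ae_restrict_mem measurableSet_Ioi] with t ht
        have hset : {a | t < (φ a).toReal} = {a | ENNReal.ofReal t < φ a} := by
          ext a
          exact (ENNReal.ofReal_lt_iff_lt_toReal (le_of_lt ht) (hφt a)).symm
        have hset' : {b | t < (ψ b).toReal} = {b | ENNReal.ofReal t < ψ b} := by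
          ext b
          exact (ENNReal.ofReal_lt_iff_lt_toReal (le_of_lt ht) (hψt b)).symm
        rw [hset, hset', toMeas_apply, toMeas_apply]
        refine le_trans (h _) (mass_mono ν ?_)
        rintro b ⟨a, ha, hab⟩
        exact lt_of_lt_of_le ha (hQ a b hab)
    _ = ∫⁻ b, ENNReal.ofReal ((ψ b).toReal) ∂(toMeas ν) := by
        exact (lintegral_eq_lintegral_meas_lt (toMeas ν)
          (Filter.Eventually.of_forall fun b => ENNReal.toReal_nonneg)
          hmψ.aemeasurable).symm
    _ = ∫⁻ b, ψ b ∂(toMeas ν) := lintegral_congr fun b => (eψ b).symm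

lemma mass_bindD {A B : Type} (μ : A → ℝ≥0∞) (h : A → B → ℝ≥0∞) (U : Set B) :
    mass (bindD μ h) U = ∑' a, μ a * mass (h a) U := by
  rw [mass]
  simp only [bindD]
  rw [ENNReal.tsum_comm]
  congr 1
  ext a
  rw [mass, ENNReal.tsum_mul_left]

lemma gammaE_inr {E X Y : Type} (S : X → Y → Prop) (e : E) :
    GammaE E S (Sum.inr e) (Sum.inr e) :=
  ⟨fun e' he => congrArg Sum.inr (Sum.inr.inj he), fun x hx => by simp at hx⟩

/-- The composite map `Γ_D ∘ Γ_E` satisfies the Lax-Unit and Lax-Bind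
conditions for the monad `T X = D(X + E)` with unit `η x = δ(inl x)` and
Kleisli extension `f† μ = μ >>=_D f_*`. -/
theorem gammaD_gammaE_lax_unit_and_bind (E : Type) :
    (∀ (X Y : Type) (R : X → Y → Prop) (x : X) (y : Y), R x y →
      GammaD (GammaE E R) (dirac (Sum.inl x) : (X ⊕ E) → ℝ≥0∞)
        (dirac (Sum.inl y) : (Y ⊕ E) → ℝ≥0∞)) ∧
    (∀ (X Y Z W : Type) (R : X → Y → Prop) (S : Z → W → Prop)
      (μ : (X ⊕ E) → ℝ≥0∞) (hμ : (∑' u, μ u) ≤ 1)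
      (ν : (Y ⊕ E) → ℝ≥0∞) (hν : (∑' v, ν v) ≤ 1)
      (f : X → (Z ⊕ E) → ℝ≥0∞) (hf : ∀ x, (∑' u, f x u) ≤ 1)
      (g : Y → (W ⊕ E) → ℝ≥0∞) (hg : ∀ y, (∑' u, g y u) ≤ 1),
      GammaD (GammaE E R) μ ν →
      (∀ x y, R x y → GammaD (GammaE E S) (f x) (g y)) →
      GammaD (GammaE E S) (dagger f μ) (dagger g ν)) := by
  constructor
  · -- Lax-Unit
    intro X Y R x y hR U
    rw [mass_dirac, mass_dirac]
    by_cases h : Sum.inl x ∈ U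
    · rw [if_pos h]
      have hmem : (Sum.inl y : Y ⊕ E) ∈ relImg (GammaE E R) U := by
        refine ⟨Sum.inl x, h, ?_, ?_⟩
        · intro e he; simp at he
        · intro x' hx'
          exact ⟨y, rfl, by rwa [← Sum.inl.inj hx']⟩
      rw [if_pos hmem]
    · rw [if_neg h]; exact zero_le
  · -- Lax-Bind
    intro X Y Z W R S μ hμ ν hν f hf g hg hμν hfg U
    rw [dagger, dagger, mass_bindD, mass_bindD]
    refine key_lemma (GammaE E R) μ ν hμν
      (fun a => mass (fstar f a) U)
      (fun b => mass (fstar g b) (relImg (GammaE E S) U))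
      ?_ ?_ ?_
    · rintro (x | e)
      · exact le_trans (mass_le_tsum _ _) (hf x)
      · simp only [fstar, mass_dirac]
        split <;> simp
    · rintro (y | e)
      · exact le_trans (mass_le_tsum _ _) (hg y)
      · simp only [fstar, mass_dirac]
        split <;> simp
    · rintro (x | e) b ⟨h1, h2⟩
      · obtain ⟨y, rfl, hxy⟩ := h2 x rfl
        exact hfg x y hxy U
      · have hb : b = Sum.inr e := h1 e rfl
        subst hb
        simp only [fstar, mass_dirac]
        by_cases hU : (Sum.inr e : Z ⊕ E) ∈ U
        · rw [if_pos hU, if_pos ⟨Sum.inr e, hU, gammaE_inr S e⟩]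
        · rw [if_neg hU]; exact zero_le
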